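/- Suppose g = (g_1,…,g_m) is a tuple of polynomials in ℝ[X_1,…,X_n] such that S(g) is convex and has nonempty interior. Suppose u ∈ S(g) and let I := {i ∈ {1,…,m} : g_i(u) = 0}. Suppose f ∈ ℝ[X_1,…,X_n] and U is a neighborhood of u such that u is a minimizer of f on S(g) ∩ U and the Hessian matrix Hess g_i(x) is negative semidefinite for all x ∈ S(g) ∩ U and all i ∈ I. Then there exists a family (λ_i)_{i∈I} of nonnegative real numbers such that ∇f(u) = ∑_{i∈I} λ_i ∇g_i(u). -/
import Mathlib


open MvPolynomial Matrix

noncomputable section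

/-- `S(g) = {x ∈ ℝⁿ : g₁(x) ≥ 0, …, g_m(x) ≥ 0}`. -/
def SolSet {n m : ℕ} (g : Fin m → MvPolynomial (Fin n) ℝ) : Set (Fin n → ℝ) :=
  {x | ∀ i, 0 ≤ eval x (g i)}

/-- The gradient `∇g(x)` of a polynomial `g` at a point `x`. -/
def gradEval {n : ℕ} (g : MvPolynomial (Fin n) ℝ) (x : Fin n → ℝ) : Fin n → ℝ :=
  fun i => eval x (pderiv i g)

/-- The Hessian `(Hess g)(x)` of a polynomial `g` at a point `x`. -/
def hessEval {n : ℕ} (g : MvPolynomial (Fin n) ℝ) (x : Fin n → ℝ) :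
    Matrix (Fin n) (Fin n) ℝ :=
  Matrix.of fun i j => eval x (pderiv i (pderiv j g))

section Helpers
open Polynomial Filter

variable {n : ℕ}

/-- Restriction of a multivariate polynomial to a line `t ↦ u + t • d`. -/
def lineP (u d : Fin n → ℝ) (p : MvPolynomial (Fin n) ℝ) : Polynomial ℝ :=
  MvPolynomial.aeval (fun i => Polynomial.C (u i) + Polynomial.C (d i) * Polynomial.X) p

lemma lineP_add (u d : Fin n → ℝ) (p q : MvPolynomial (Fin n) ℝ) :
    lineP u d (p + q) = lineP u d p + lineP u d q := map_add _ _ _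

lemma lineP_mul (u d : Fin n → ℝ) (p q : MvPolynomial (Fin n) ℝ) :
    lineP u d (p * q) = lineP u d p * lineP u d q := map_mul _ _ _

lemma lineP_C (u d : Fin n → ℝ) (a : ℝ) :
    lineP u d (MvPolynomial.C a) = Polynomial.C a := by simp [lineP]

lemma lineP_X (u d : Fin n → ℝ) (j : Fin n) :
    lineP u d (MvPolynomial.X j) = Polynomial.C (u j) + Polynomial.C (d j) * Polynomial.X :=
  MvPolynomial.aeval_X _ _

lemma eval_lineP (u d : Fin n → ℝ) (p : MvPolynomial (Fin n) ℝ) (t : ℝ) :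
    (lineP u d p).eval t = MvPolynomial.eval (u + t • d) p := by
  induction p using MvPolynomial.induction_on with
  | C a => simp [lineP_C]
  | add p q hp hq => rw [lineP_add, Polynomial.eval_add, hp, hq, map_add]
  | mul_X p j hp =>
      rw [lineP_mul, lineP_X, Polynomial.eval_mul, hp, _root_.map_mul, MvPolynomial.eval_X]
      simp only [Polynomial.eval_add, Polynomial.eval_mul, Polynomial.eval_C, Polynomial.eval_X,
        Pi.add_apply, Pi.smul_apply, smul_eq_mul]
      ring

lemma derivative_lineP (u d : Fin n → ℝ) (p : MvPolynomial (Fin n) ℝ) :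
    (lineP u d p).derivative = ∑ i, Polynomial.C (d i) * lineP u d (pderiv i p) := by
  induction p using MvPolynomial.induction_on with
  | C a => simp [lineP]
  | add p q hp hq =>
      simp only [lineP_add, map_add, derivative_add, hp, hq, ← Finset.sum_add_distrib, mul_add]
  | mul_X p j hp =>
      rw [lineP_mul, lineP_X, derivative_mul, hp]
      have key : ∀ x : Fin n, lineP u d (pderiv x (p * MvPolynomial.X j))
          = lineP u d (pderiv x p) * (Polynomial.C (u j) + Polynomial.C (d j) * Polynomial.X)
            + (if x = j then lineP u d p else 0) := by
        intro x
        rw [pderiv_mul, pderiv_X, lineP_add, lineP_mul, lineP_X, lineP_mul]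
        by_cases h : x = j <;> simp [h, Pi.single_apply, lineP]
      simp only [key, mul_add, mul_ite, mul_zero, Finset.sum_add_distrib]
      rw [Finset.sum_ite_eq' Finset.univ j (fun x => Polynomial.C (d x) * lineP u d p)]
      simp only [Finset.mem_univ, if_true, Finset.sum_mul, derivative_add, derivative_C,
        derivative_C_mul, derivative_X, mul_one, zero_add]
      rw [mul_comm (lineP u d p)]
      simp only [mul_assoc]

lemma eval0_lineP (u d : Fin n → ℝ) (p : MvPolynomial (Fin n) ℝ) :
    (lineP u d p).eval 0 = MvPolynomial.eval u p := by
  rw [eval_lineP]; simp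

lemma deriv0_lineP (u d : Fin n → ℝ) (p : MvPolynomial (Fin n) ℝ) :
    (lineP u d p).derivative.eval 0 = gradEval p u ⬝ᵥ d := by
  rw [derivative_lineP]
  simp only [Polynomial.eval_finset_sum, Polynomial.eval_mul, Polynomial.eval_C, eval0_lineP,
    gradEval, dotProduct]
  exact Finset.sum_congr rfl fun i _ => mul_comm _ _

lemma dd_lineP (u d : Fin n → ℝ) (p : MvPolynomial (Fin n) ℝ) (t : ℝ) :
    (lineP u d p).derivative.derivative.eval t = d ⬝ᵥ (hessEval p (u + t • d)) *ᵥ d := by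
  rw [derivative_lineP, Polynomial.derivative_sum]
  simp only [Polynomial.derivative_C_mul, derivative_lineP, Polynomial.eval_finset_sum,
    Polynomial.eval_mul, Polynomial.eval_C, eval_lineP, Finset.mul_sum]
  rw [Finset.sum_comm]
  simp only [dotProduct, Matrix.mulVec, hessEval, Matrix.of_apply, Finset.mul_sum]
  exact Finset.sum_congr rfl fun i _ => Finset.sum_congr rfl fun j _ => by ring

lemma slope_tendsto_right (φ : Polynomial ℝ) :
    Tendsto (fun t => (φ.eval t - φ.eval 0) / t) (nhdsWithin 0 (Set.Ioi 0))
      (nhds (φ.derivative.eval 0)) := by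
  have hd := (φ.hasDerivAt (0:ℝ))
  rw [hasDerivAt_iff_tendsto_slope] at hd
  have hle : nhdsWithin (0:ℝ) (Set.Ioi 0) ≤ nhdsWithin 0 {(0:ℝ)}ᶜ :=
    nhdsWithin_mono 0 (fun x hx => ne_of_gt hx)
  have := hd.mono_left hle
  refine this.congr (fun t => ?_)
  simp [slope_def_field, div_eq_div_iff]

lemma deriv_nonneg_of_right_min (φ : Polynomial ℝ)
    (h : ∀ᶠ t in nhdsWithin (0:ℝ) (Set.Ioi 0), φ.eval 0 ≤ φ.eval t) :
    0 ≤ φ.derivative.eval 0 := by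
  refine ge_of_tendsto (slope_tendsto_right φ) ?_
  filter_upwards [h, self_mem_nhdsWithin] with t ht ht0
  exact div_nonneg (sub_nonneg.2 ht) (le_of_lt ht0)

lemma eventually_pos_of_deriv_pos (φ : Polynomial ℝ) (h0 : φ.eval 0 = 0)
    (h1 : 0 < φ.derivative.eval 0) :
    ∀ᶠ t in nhdsWithin (0:ℝ) (Set.Ioi 0), 0 < φ.eval t := by
  have := (slope_tendsto_right φ).eventually (eventually_gt_nhds h1)
  filter_upwards [this, self_mem_nhdsWithin] with t ht ht0
  rw [h0, sub_zero] at ht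
  have := mul_pos ht (show (0:ℝ) < t from ht0)
  rwa [div_mul_cancel₀] at this
  exact ne_of_gt ht0

lemma poly_concave_segment (φ : Polynomial ℝ)
    (h : ∀ t ∈ Set.Icc (0:ℝ) 1, φ.derivative.derivative.eval t ≤ 0) :
    φ.eval 1 ≤ φ.eval 0 + φ.derivative.eval 0 := by
  set ψ : Polynomial ℝ := Polynomial.C (φ.eval 0) + Polynomial.C (φ.derivative.eval 0)
      * Polynomial.X - φ with hψ
  have hψd : ψ.derivative = Polynomial.C (φ.derivative.eval 0) - φ.derivative := by
    simp [hψ]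
  have hanti : AntitoneOn (fun t => φ.derivative.eval t) (Set.Icc (0:ℝ) 1) := by
    apply antitoneOn_of_deriv_nonpos (convex_Icc 0 1)
      (φ.derivative.continuous.continuousOn)
      (fun x _ => (φ.derivative.differentiableAt).differentiableWithinAt)
    intro x hx
    rw [Polynomial.deriv]
    exact h x (Set.mem_Icc_of_Ioo (by simpa [interior_Icc] using hx))
  have hmono : MonotoneOn (fun t => ψ.eval t) (Set.Icc (0:ℝ) 1) := by
    apply monotoneOn_of_deriv_nonneg (convex_Icc 0 1)
      (ψ.continuous.continuousOn) (fun x _ => (ψ.differentiableAt).differentiableWithinAt)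
    intro x hx
    rw [Polynomial.deriv, hψd]
    simp only [Polynomial.eval_sub, Polynomial.eval_C, sub_nonneg]
    have hx' : x ∈ Set.Ioo (0:ℝ) 1 := by simpa [interior_Icc] using hx
    exact hanti (Set.left_mem_Icc.2 zero_le_one) (Set.mem_Icc_of_Ioo hx') hx'.1.le
  have := hmono (Set.left_mem_Icc.2 zero_le_one) (Set.right_mem_Icc.2 zero_le_one) zero_le_one
  simp only [hψ, Polynomial.eval_sub, Polynomial.eval_add, Polynomial.eval_mul,
    Polynomial.eval_C, Polynomial.eval_X, mul_zero, mul_one, add_zero] at this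
  linarith

lemma mv_eq_zero_of_ball {p : MvPolynomial (Fin n) ℝ} {z : Fin n → ℝ} {ρ : ℝ} (hρ : 0 < ρ)
    (h : ∀ x ∈ Metric.ball z ρ, MvPolynomial.eval x p = 0) : p = 0 := by
  apply MvPolynomial.funext
  intro x
  have key : ∀ y : Fin n → ℝ, MvPolynomial.eval y p = 0 := by
    intro y
    set d := y - z with hd
    set φ := lineP z d p with hφ
    set δ := ρ / (‖d‖ + 1) with hδ
    have hδpos : 0 < δ := div_pos hρ (by positivity)
    have hroots : Set.Ioo (0:ℝ) δ ⊆ {t | φ.IsRoot t} := by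
      intro t ht
      have hmem : z + t • d ∈ Metric.ball z ρ := by
        rw [Metric.mem_ball, dist_eq_norm]
        have : z + t • d - z = t • d := by abel
        rw [this, norm_smul, Real.norm_eq_abs, abs_of_pos ht.1]
        calc t * ‖d‖ ≤ t * (‖d‖ + 1) := by nlinarith [ht.1]
          _ < δ * (‖d‖ + 1) := by nlinarith [ht.2, ht.1, norm_nonneg d]
          _ = ρ := by rw [hδ]; field_simp
      show φ.eval t = 0
      rw [hφ, eval_lineP]
      exact h _ hmem
    have hφ0 : φ = 0 := by
      apply Polynomial.eq_zero_of_infinite_isRoot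
      exact Set.Infinite.mono hroots (Set.Ioo_infinite hδpos)
    have h1 := eval_lineP z d p 1
    rw [← hφ, hφ0] at h1
    simp only [Polynomial.eval_zero] at h1
    have h2 : z + (1:ℝ) • d = y := by rw [hd, one_smul]; abel
    rw [h2] at h1
    exact h1.symm
  rw [key x, map_zero]

def InCone {n m : ℕ} (a : Fin m → (Fin n → ℝ)) (b : Fin n → ℝ) : Prop :=
  ∃ lam : Fin m → ℝ, (∀ i, 0 ≤ lam i) ∧ b = ∑ i, lam i • a i

lemma farkas_aux : ∀ (m : ℕ) (a : Fin m → (Fin n → ℝ)) (b : Fin n → ℝ),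
    ¬ InCone a b → ∃ d : Fin n → ℝ, (∀ i, 0 ≤ a i ⬝ᵥ d) ∧ b ⬝ᵥ d < 0 := by
  intro m
  induction m with
  | zero =>
      intro a b hb
      refine ⟨-b, fun i => i.elim0, ?_⟩
      have hbne : b ≠ 0 := by
        intro h; exact hb ⟨fun i => 0, fun i => le_refl _, by simp [h]⟩
      have hpos : 0 < b ⬝ᵥ b := by
        have h1 : 0 ≤ b ⬝ᵥ b := Finset.sum_nonneg fun i _ => mul_self_nonneg _
        have h2 : b ⬝ᵥ b ≠ 0 := fun h => hbne (dotProduct_self_eq_zero.1 h)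
        exact lt_of_le_of_ne h1 (Ne.symm h2)
      rw [dotProduct_neg]
      exact neg_lt_zero.2 hpos
  | succ m ih =>
      intro a b hb
      have hb' : ¬ InCone (fun i : Fin m => a i.castSucc) b := by
        rintro ⟨lam, hlam, hsum⟩
        refine hb ⟨Fin.snoc lam 0, ?_, ?_⟩
        · intro i
          refine Fin.lastCases ?_ (fun j => ?_) i <;> simp [Fin.snoc_last, Fin.snoc_castSucc]
          exact hlam j
        · rw [Fin.sum_univ_castSucc]
          simp [Fin.snoc_last, Fin.snoc_castSucc, hsum]
      obtain ⟨d, hd, hbd⟩ := ih _ b hb'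
      by_cases hlast : 0 ≤ a (Fin.last m) ⬝ᵥ d
      · refine ⟨d, ?_, hbd⟩
        intro i
        refine Fin.lastCases hlast (fun j => hd j) i
      · push_neg at hlast
        set c := a (Fin.last m) with hc
        set γ := c ⬝ᵥ d with hγ
        have hγneg : γ < 0 := hlast
        set a' : Fin m → (Fin n → ℝ) :=
          fun i => a i.castSucc - ((a i.castSucc ⬝ᵥ d) / γ) • c with ha'
        set b' : Fin n → ℝ := b - ((b ⬝ᵥ d) / γ) • c with hb''
        have hb'cone : ¬ InCone a' b' := by
          rintro ⟨mu, hmu, hsum⟩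
          set t : ℝ := (b ⬝ᵥ d - ∑ i, mu i * (a i.castSucc ⬝ᵥ d)) / γ with ht
          have htpos : 0 < t := by
            apply div_pos_of_neg_of_neg _ hγneg
            have : 0 ≤ ∑ i, mu i * (a i.castSucc ⬝ᵥ d) :=
              Finset.sum_nonneg fun i _ => mul_nonneg (hmu i) (hd i)
            linarith
          have hexp : b = ∑ i, mu i • a i.castSucc + t • c := by
            have h1 : b = b' + ((b ⬝ᵥ d) / γ) • c := by simp [hb'']
            rw [h1, hsum]
            have h2 : ∀ i, mu i • a' i
                = mu i • a i.castSucc - (mu i * ((a i.castSucc ⬝ᵥ d) / γ)) • c := by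
              intro i; simp [ha', smul_sub, smul_smul]
            simp only [h2, Finset.sum_sub_distrib, ← Finset.sum_smul]
            have h3 : ∑ i, mu i * ((a i.castSucc ⬝ᵥ d) / γ)
                = (∑ i, mu i * (a i.castSucc ⬝ᵥ d)) / γ := by
              rw [Finset.sum_div]; simp_rw [mul_div_assoc]
            rw [h3, ht, sub_div, Finset.sum_div, sub_smul]
            abel
          refine hb ⟨Fin.snoc mu t, ?_, ?_⟩
          · intro i
            refine Fin.lastCases ?_ (fun j => ?_) i <;> simp [Fin.snoc_last, Fin.snoc_castSucc]
            · exact htpos.le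
            · exact hmu j
          · rw [Fin.sum_univ_castSucc]
            simpa [Fin.snoc_last, Fin.snoc_castSucc] using hexp
        obtain ⟨d', hd', hbd'⟩ := ih _ b' hb'cone
        set d'' : Fin n → ℝ := d' - ((c ⬝ᵥ d') / γ) • d with hd''
        have hkey : ∀ v : Fin n → ℝ, v ⬝ᵥ d'' = (v - ((v ⬝ᵥ d) / γ) • c) ⬝ᵥ d' := by
          intro v
          simp only [hd'', dotProduct_sub, sub_dotProduct, dotProduct_smul,
            smul_dotProduct, smul_eq_mul]
          ring
        refine ⟨d'', ?_, ?_⟩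
        · intro i
          refine Fin.lastCases ?_ (fun j => ?_) i
          · rw [show a (Fin.last m) ⬝ᵥ d'' = c ⬝ᵥ d'' from rfl, hkey c]
            have : c - ((c ⬝ᵥ d) / γ) • c = 0 := by
              rw [← hγ, div_self (ne_of_lt hγneg)]; simp
            rw [this]; simp
          · rw [hkey]; exact hd' j
        · rw [hkey]; exact hbd'

theorem farkas {m : ℕ} (a : Fin m → (Fin n → ℝ)) (b : Fin n → ℝ)
    (h : ∀ d : Fin n → ℝ, (∀ i, 0 ≤ a i ⬝ᵥ d) → 0 ≤ b ⬝ᵥ d) :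
    ∃ lam : Fin m → ℝ, (∀ i, 0 ≤ lam i) ∧ b = ∑ i, lam i • a i := by
  by_contra hc
  obtain ⟨d, hd, hbd⟩ := farkas_aux m a b hc
  exact absurd (h d hd) (not_le.2 hbd)

end Helpers


theorem stmt_8 {n m : ℕ} (g : Fin m → MvPolynomial (Fin n) ℝ)
    (hconv : Convex ℝ (SolSet g)) (hint : (interior (SolSet g)).Nonempty)
    (u : Fin n → ℝ) (hu : u ∈ SolSet g)
    (f : MvPolynomial (Fin n) ℝ) (U : Set (Fin n → ℝ)) (hU : U ∈ nhds u)
    (hmin : ∀ x ∈ SolSet g ∩ U, eval u f ≤ eval x f)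
    (hhess : ∀ i : Fin m, eval u (g i) = 0 →
      ∀ x ∈ SolSet g ∩ U, ∀ v : Fin n → ℝ, v ⬝ᵥ (hessEval (g i) x) *ᵥ v ≤ 0) :
    ∃ lam : Fin m → ℝ, (∀ i, 0 ≤ lam i) ∧
      (∀ i, eval u (g i) ≠ 0 → lam i = 0) ∧
      gradEval f u = ∑ i, lam i • gradEval (g i) u := by
  classical
  obtain ⟨r, hr, hball⟩ := Metric.nhds_basis_closedBall.mem_iff.1 hU
  set K : Set (Fin n → ℝ) := SolSet g ∩ Metric.closedBall u r with hK
  have hKconv : Convex ℝ K := hconv.inter (convex_closedBall _ _)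
  have hKsub : K ⊆ SolSet g ∩ U := fun x hx => ⟨hx.1, hball hx.2⟩
  have huK : u ∈ K := ⟨hu, Metric.mem_closedBall_self hr.le⟩
  -- tangent-line inequality for active constraints on K
  have tangent : ∀ i, eval u (g i) = 0 → ∀ x ∈ K, ∀ y ∈ K,
      eval y (g i) ≤ eval x (g i) + gradEval (g i) x ⬝ᵥ (y - x) := by
    intro i hi x hx y hy
    have hcc : ∀ t ∈ Set.Icc (0:ℝ) 1,
        (lineP x (y - x) (g i)).derivative.derivative.eval t ≤ 0 := by
      intro t ht
      rw [dd_lineP]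
      apply hhess i hi
      apply hKsub
      have hmem : (1 - t) • x + t • y ∈ K :=
        hKconv hx hy (by linarith [ht.1, ht.2]) ht.1 (by ring)
      have heq : x + t • (y - x) = (1 - t) • x + t • y := by
        rw [smul_sub, sub_smul, one_smul]; abel
      rwa [heq]
    have := poly_concave_segment _ hcc
    rw [eval_lineP, eval0_lineP, deriv0_lineP] at this
    simpa using this
  -- an interior point close to u
  obtain ⟨w, hw⟩ := hint
  set t₀ : ℝ := min 1 (r / (‖w - u‖ + 1)) with ht₀
  have ht₀pos : 0 < t₀ := lt_min one_pos (div_pos hr (by positivity))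
  have ht₀le : t₀ ≤ 1 := by rw [ht₀]; exact min_le_left _ _
  set w₀ : Fin n → ℝ := u + t₀ • (w - u) with hw₀
  have hw₀int : w₀ ∈ interior (SolSet g) := by
    have h1 : t₀ • w + (1 - t₀) • u ∈ interior (SolSet g) :=
      hconv.combo_interior_self_mem_interior hw hu ht₀pos
        (by linarith) (by ring)
    have heq : w₀ = t₀ • w + (1 - t₀) • u := by
      rw [hw₀, smul_sub, sub_smul, one_smul]; abel
    rwa [heq]
  have hw₀ball : w₀ ∈ Metric.ball u r := by
    rw [Metric.mem_ball, dist_eq_norm, hw₀]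
    have h1 : u + t₀ • (w - u) - u = t₀ • (w - u) := by abel
    rw [h1, norm_smul, Real.norm_eq_abs, abs_of_pos ht₀pos]
    have h2 : t₀ ≤ r / (‖w - u‖ + 1) := min_le_right _ _
    have h3 : 0 ≤ ‖w - u‖ := norm_nonneg _
    have h4 : t₀ * ‖w - u‖ ≤ r / (‖w - u‖ + 1) * ‖w - u‖ :=
      mul_le_mul_of_nonneg_right h2 h3
    have h5 : r / (‖w - u‖ + 1) * ‖w - u‖ < r := by
      rw [div_mul_eq_mul_div, div_lt_iff₀ (by positivity)]
      nlinarith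
    linarith
  have hw₀K : w₀ ∈ K := ⟨interior_subset hw₀int, Metric.ball_subset_closedBall hw₀ball⟩
  -- the open set V
  set V : Set (Fin n → ℝ) := interior (SolSet g) ∩ Metric.ball u r with hV
  have hVopen : IsOpen V := isOpen_interior.inter Metric.isOpen_ball
  have hw₀V : w₀ ∈ V := ⟨hw₀int, hw₀ball⟩
  have hVK : V ⊆ K := fun x hx => ⟨interior_subset hx.1, Metric.ball_subset_closedBall hx.2⟩
  -- dichotomy: an active nonzero gᵢ is positive at w₀
  have dich : ∀ i, eval u (g i) = 0 → g i ≠ 0 → 0 < eval w₀ (g i) := by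
    intro i hi hne
    have hnn : 0 ≤ eval w₀ (g i) := (interior_subset hw₀int) i
    rcases hnn.lt_or_eq with h | h
    · exact h
    exfalso
    apply hne
    -- g i vanishes identically on V
    have hzero : ∀ x ∈ V, eval x (g i) = 0 := by
      intro x hx
      -- find y = w₀ + δ(w₀ - x) ∈ V
      obtain ⟨ρ, hρpos, hρsub⟩ := Metric.isOpen_iff.1 hVopen w₀ hw₀V
      set δ : ℝ := ρ / (2 * (‖w₀ - x‖ + 1)) with hδ
      have hδpos : 0 < δ := div_pos hρpos (by positivity)
      set y : Fin n → ℝ := w₀ + δ • (w₀ - x) with hy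
      have hyV : y ∈ V := by
        apply hρsub
        rw [Metric.mem_ball, dist_eq_norm, hy]
        have h1 : w₀ + δ • (w₀ - x) - w₀ = δ • (w₀ - x) := by abel
        rw [h1, norm_smul, Real.norm_eq_abs, abs_of_pos hδpos]
        have h3 : 0 ≤ ‖w₀ - x‖ := norm_nonneg _
        rw [hδ, div_mul_eq_mul_div, div_lt_iff₀ (by positivity)]
        nlinarith
      have t1 := tangent i hi w₀ hw₀K x (hVK hx)
      have t2 := tangent i hi w₀ hw₀K y (hVK hyV)
      have hval : eval w₀ (g i) = 0 := h.symm
      have hy0 : 0 ≤ eval y (g i) := (interior_subset hyV.1) i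
      have hx0 : 0 ≤ eval x (g i) := (interior_subset hx.1) i
      have hyw : y - w₀ = (-δ) • (x - w₀) := by
        rw [hy, neg_smul, smul_sub, smul_sub]; abel
      rw [hyw, dotProduct_smul, smul_eq_mul] at t2
      have hdp : gradEval (g i) w₀ ⬝ᵥ (x - w₀) ≤ 0 := by nlinarith
      linarith [t1, hdp, hval, hx0]
    obtain ⟨ρ, hρpos, hρsub⟩ := Metric.isOpen_iff.1 hVopen w₀ hw₀V
    exact mv_eq_zero_of_ball hρpos (fun x hx => hzero x (hρsub hx))
  -- Slater: active nonzero gradients have positive product with w₀ - u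
  have hslater : ∀ i, eval u (g i) = 0 → g i ≠ 0 →
      0 < gradEval (g i) u ⬝ᵥ (w₀ - u) := by
    intro i hi hne
    have t1 := tangent i hi u huK w₀ hw₀K
    rw [hi, zero_add] at t1
    exact lt_of_lt_of_le (dich i hi hne) t1
  -- core first-order inequality
  have core : ∀ d : Fin n → ℝ,
      (∀ i, eval u (g i) = 0 → g i ≠ 0 → 0 ≤ gradEval (g i) u ⬝ᵥ d) →
      0 ≤ gradEval f u ⬝ᵥ d := by
    intro d hd
    set e : Fin n → ℝ := w₀ - u with he
    have step : ∀ ε : ℝ, 0 < ε → 0 ≤ gradEval f u ⬝ᵥ (d + ε • e) := by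
      intro ε hε
      set dε : Fin n → ℝ := d + ε • e with hdε
      have hfeas : ∀ᶠ t in nhdsWithin (0:ℝ) (Set.Ioi 0), u + t • dε ∈ SolSet g ∩ U := by
        have hcont : Filter.Tendsto (fun t : ℝ => u + t • dε) (nhds 0) (nhds u) := by
          have hc : Continuous fun t : ℝ => u + t • dε :=
            continuous_const.add (continuous_id.smul continuous_const)
          have := hc.tendsto 0
          simpa using this
        have hU' : ∀ᶠ t in nhdsWithin (0:ℝ) (Set.Ioi 0), u + t • dε ∈ U :=
          ((hcont.mono_left nhdsWithin_le_nhds).eventually_mem hU)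
        have hS : ∀ i : Fin m, ∀ᶠ t in nhdsWithin (0:ℝ) (Set.Ioi 0),
            0 ≤ eval (u + t • dε) (g i) := by
          intro i
          by_cases hzero : g i = 0
          · filter_upwards with t; simp [hzero]
          by_cases hact : eval u (g i) = 0
          · have hgrad : 0 < gradEval (g i) u ⬝ᵥ dε := by
              have h1 := hd i hact hzero
              have h2 := hslater i hact hzero
              rw [hdε, dotProduct_add, dotProduct_smul]
              have : (0:ℝ) < ε • (gradEval (g i) u ⬝ᵥ e) := by
                rw [smul_eq_mul]; exact mul_pos hε h2
              linarith
            have hev := eventually_pos_of_deriv_pos (lineP u dε (g i))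
              (by rw [eval0_lineP]; exact hact) (by rw [deriv0_lineP]; exact hgrad)
            filter_upwards [hev] with t ht
            rw [← eval_lineP]
            exact ht.le
          · have hpos : 0 < eval u (g i) := lt_of_le_of_ne (hu i) (Ne.symm hact)
            have hcont2 : Filter.Tendsto (fun t : ℝ => (lineP u dε (g i)).eval t)
                (nhds 0) (nhds (eval u (g i))) := by
              have := ((lineP u dε (g i)).continuous).tendsto 0
              rwa [eval0_lineP] at this
            have := (hcont2.mono_left (nhdsWithin_le_nhds :
                nhdsWithin (0:ℝ) (Set.Ioi 0) ≤ nhds 0)).eventually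
              (eventually_gt_nhds hpos)
            filter_upwards [this] with t ht
            rw [← eval_lineP]
            exact ht.le
        have hSall : ∀ᶠ t in nhdsWithin (0:ℝ) (Set.Ioi 0), u + t • dε ∈ SolSet g :=
          Filter.eventually_all.2 hS
        filter_upwards [hSall, hU'] with t h1 h2
        exact ⟨h1, h2⟩
      have hminφ : ∀ᶠ t in nhdsWithin (0:ℝ) (Set.Ioi 0),
          (lineP u dε f).eval 0 ≤ (lineP u dε f).eval t := by
        filter_upwards [hfeas] with t ht
        rw [eval_lineP, eval_lineP]
        simp only [zero_smul, add_zero]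
        exact hmin _ ht
      have := deriv_nonneg_of_right_min _ hminφ
      rwa [deriv0_lineP] at this
    have hlim : Filter.Tendsto (fun ε : ℝ => gradEval f u ⬝ᵥ (d + ε • e))
        (nhdsWithin (0:ℝ) (Set.Ioi 0)) (nhds (gradEval f u ⬝ᵥ d)) := by
      have hc : Continuous fun ε : ℝ => gradEval f u ⬝ᵥ (d + ε • e) := by
        simp only [dotProduct_add, dotProduct_smul, smul_eq_mul]
        exact continuous_const.add (continuous_id.mul continuous_const)
      have := hc.tendsto 0
      simp only [zero_smul, add_zero, zero_mul] at this
      exact (this.mono_left nhdsWithin_le_nhds).congr' (by filter_upwards with x; rfl)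
    refine ge_of_tendsto hlim ?_
    filter_upwards [self_mem_nhdsWithin] with ε hε
    exact step ε hε
  -- apply Farkas
  set a' : Fin m → (Fin n → ℝ) :=
    fun i => if eval u (g i) = 0 ∧ g i ≠ 0 then gradEval (g i) u else 0 with ha'
  obtain ⟨lam, hlam, hsum⟩ := farkas a' (gradEval f u) (by
    intro d hd
    apply core
    intro i hi hne
    have := hd i
    simp only [ha', if_pos (⟨hi, hne⟩ : eval u (g i) = 0 ∧ g i ≠ 0)] at this
    exact this)
  refine ⟨fun i => if eval u (g i) = 0 ∧ g i ≠ 0 then lam i else 0, ?_, ?_, ?_⟩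
  · intro i
    by_cases hc : eval u (g i) = 0 ∧ g i ≠ 0
    · simp only [if_pos hc]; exact hlam i
    · simp only [if_neg hc]; exact le_refl _
  · intro i hi
    have hc : ¬ (eval u (g i) = 0 ∧ g i ≠ 0) := fun hcc => hi hcc.1
    simp only [if_neg hc]
  · rw [hsum]
    refine Finset.sum_congr rfl fun i _ => ?_
    by_cases hc : eval u (g i) = 0 ∧ g i ≠ 0
    · simp only [ha', if_pos hc]
    · simp only [ha', if_neg hc, smul_zero, zero_smul]
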